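/- arXiv:2212.01563 — 2 statements merged into one kernel-verified Lean document; each statement's English description precedes it below -/
import Mathlib

section
/- Correlation of consecutive probings under random phase shifts, direct path subtracted (Lemma 3, RPS case). In the direct-path-subtracted model with samples t_p = star v ⬝ᵥ (Φ_p.mulVec u) + (n_p − n_d), suppose Φ_p(ω) is the diagonal matrix with diagonal entries exp(I · φ_{p,n}(ω)), where the 2N real random variables φ_{p,n} (p ∈ {1,2}, n ∈ Fin N) are mutually independent, each uniform on (−π, π), and are independent of (u, v, n₁, n₂, n_d). Assume (u, v, n₁, n₂, n_d) mutually independent, all (entrywise) zero-mean and square-integrable, E[|n₁|²] = E[|n₂|²] = σ², E[n₁ · conj(n₂)] = 0, E[|n_d|²] = σ_d². Then the correlation coefficient ρ = E[t₁ · conj(t₂)] / E[|t_l|²] equals σ_d² / (Σ_{n} R_u n n · R_v n n + σ_d² + σ²). -/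
set_option maxHeartbeats 1000000

open MeasureTheory ProbabilityTheory Matrix Complex Real


section RPSaux

variable {Ω : Type*} [MeasurableSpace Ω] {μ : MeasureTheory.Measure Ω} [IsProbabilityMeasure μ]

lemma memL2_star {f : Ω → ℂ} (h : MemLp f 2 μ) : MemLp (fun ω => star (f ω)) 2 μ := by
  refine MemLp.of_le h (continuous_star.comp_aestronglyMeasurable h.1) ?_
  filter_upwards with ω
  simp

lemma integrable_mul_L2 {f g : Ω → ℂ} (hf : MemLp f 2 μ) (hg : MemLp g 2 μ) :
    Integrable (fun ω => f ω * g ω) μ := by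
  have h := MemLp.smul (p := 2) (q := 2) (r := 1) hg hf (hpqr := ⟨?_⟩)
  · exact memLp_one_iff_integrable.mp h
  · simp [ENNReal.inv_two_add_inv_two]

lemma integrable_L2 {f : Ω → ℂ} (hf : MemLp f 2 μ) : Integrable f μ :=
  hf.integrable one_le_two

lemma integrable_unit {f : Ω → ℂ} (hm : AEStronglyMeasurable f μ) (hb : ∀ ω, ‖f ω‖ ≤ 1) :
    Integrable f μ :=
  Integrable.mono' (integrable_const 1) hm (Filter.Eventually.of_forall hb)

lemma indep_integrable_mul {X Y : Ω → ℂ} (h : IndepFun X Y μ)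
    (hX : Integrable X μ) (hY : Integrable Y μ) :
    Integrable (fun ω => X ω * Y ω) μ := by
  have hXm : AEMeasurable X μ := hX.aemeasurable
  have hYm : AEMeasurable Y μ := hY.aemeasurable
  have hmap : μ.map (fun ω => (X ω, Y ω)) = (μ.map X).prod (μ.map Y) :=
    (indepFun_iff_map_prod_eq_prod_map_map hXm hYm).mp h
  have hidX : Integrable id (μ.map X) :=
    (integrable_map_measure aestronglyMeasurable_id hXm).mpr hX
  have hidY : Integrable id (μ.map Y) :=
    (integrable_map_measure aestronglyMeasurable_id hYm).mpr hY
  have hprod : Integrable (fun p : ℂ × ℂ => p.1 * p.2) ((μ.map X).prod (μ.map Y)) :=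
    hidX.mul_prod hidY
  have := (integrable_map_measure (f := fun ω => (X ω, Y ω)) (g := fun p : ℂ × ℂ => p.1 * p.2)
      ((measurable_fst.mul measurable_snd).aestronglyMeasurable) (hXm.prodMk hYm)).mp
      (by rw [hmap]; exact hprod)
  exact this

lemma indep_integral_mul {X Y : Ω → ℂ} (h : IndepFun X Y μ)
    (hX : Integrable X μ) (hY : Integrable Y μ) :
    ∫ ω, X ω * Y ω ∂μ = (∫ ω, X ω ∂μ) * ∫ ω, Y ω ∂μ := by
  have hXm : AEMeasurable X μ := hX.aemeasurable
  have hYm : AEMeasurable Y μ := hY.aemeasurable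
  have hmap : μ.map (fun ω => (X ω, Y ω)) = (μ.map X).prod (μ.map Y) :=
    (indepFun_iff_map_prod_eq_prod_map_map hXm hYm).mp h
  calc ∫ ω, X ω * Y ω ∂μ
      = ∫ p : ℂ × ℂ, p.1 * p.2 ∂(μ.map (fun ω => (X ω, Y ω))) := by
        rw [integral_map (f := fun p : ℂ × ℂ => p.1 * p.2) (hXm.prodMk hYm)
          ((measurable_fst.mul measurable_snd).aestronglyMeasurable)]
    _ = ∫ p : ℂ × ℂ, p.1 * p.2 ∂((μ.map X).prod (μ.map Y)) := by rw [hmap]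
    _ = (∫ x, x ∂(μ.map X)) * ∫ y, y ∂(μ.map Y) := integral_prod_mul (fun x => x) (fun y => y)
    _ = (∫ ω, X ω ∂μ) * ∫ ω, Y ω ∂μ := by
        rw [integral_map (f := fun x : ℂ => x) hXm aestronglyMeasurable_id,
          integral_map (f := fun x : ℂ => x) hYm aestronglyMeasurable_id]

lemma integral_exp_I_unif {X : Ω → ℝ} (hXm : Measurable X)
    (hX : μ.map X = (ENNReal.ofReal (2 * π))⁻¹ • (volume.restrict (Set.Ioo (-π) π))) :
    ∫ ω, Complex.exp (Complex.I * (X ω : ℂ)) ∂μ = 0 := by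
  have hmeas : AEStronglyMeasurable (fun x : ℝ => Complex.exp (Complex.I * (x : ℂ)))
      (μ.map X) := (Complex.measurable_ofReal.const_mul Complex.I).cexp.aestronglyMeasurable
  rw [← integral_map hXm.aemeasurable hmeas, hX, integral_smul_measure]
  have h0 : ∫ x in Set.Ioo (-π) π, Complex.exp (Complex.I * (x : ℂ)) = 0 := by
    rw [← integral_Ioc_eq_integral_Ioo,
      ← intervalIntegral.integral_of_le (by linarith [Real.pi_pos] : -π ≤ π),
      integral_exp_mul_complex Complex.I_ne_zero]
    have h1 : Complex.I * (π : ℂ) = (π : ℂ) * Complex.I := mul_comm _ _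
    have h2 : Complex.I * ((-π : ℝ) : ℂ) = -((π : ℂ) * Complex.I) := by push_cast; ring
    rw [h1, h2, Complex.exp_neg, Complex.exp_pi_mul_I]
    norm_num
  rw [h0]
  simp


lemma star_exp_I_real (x : ℝ) :
    star (Complex.exp (Complex.I * (x : ℂ))) = Complex.exp (-(Complex.I * (x : ℂ))) := by
  have : star (Complex.exp (Complex.I * (x : ℂ)))
      = Complex.exp (star (Complex.I * (x : ℂ))) := (Complex.exp_conj _).symm
  rw [this]
  congr 1
  simp [Complex.conj_I]

lemma norm_exp_I_real (x : ℝ) : ‖Complex.exp (Complex.I * (x : ℂ))‖ = 1 := by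
  simp [Complex.norm_exp]

lemma norm_exp_I_real_neg (x : ℝ) : ‖Complex.exp (-(Complex.I * (x : ℂ)))‖ = 1 := by
  simp [Complex.norm_exp]

lemma integral_star' {f : Ω → ℂ} : ∫ ω, star (f ω) ∂μ = star (∫ ω, f ω ∂μ) :=
  integral_conj

/-- From a joint law that is a product, derive independence of the pair. -/
lemma pair_indep {α β : Type*} [MeasurableSpace α] [MeasurableSpace β]
    {X : Ω → α} {Y : Ω → β} (hX : Measurable X) (hY : Measurable Y)
    (h : μ.map (fun ω => (X ω, Y ω)) = (μ.map X).prod (μ.map Y)) :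
    IndepFun X Y μ :=
  (indepFun_iff_map_prod_eq_prod_map_map hX.aemeasurable hY.aemeasurable).mpr h

/-- Drop the first component of a pair law. -/
lemma map_snd_of_pair {α β : Type*} [MeasurableSpace α] [MeasurableSpace β]
    {X : Ω → α} {Y : Ω → β} (hX : Measurable X) (hY : Measurable Y)
    {P : MeasureTheory.Measure α} {Q : MeasureTheory.Measure β} [IsProbabilityMeasure P]
    [SFinite Q]
    (h : μ.map (fun ω => (X ω, Y ω)) = P.prod Q) : μ.map Y = Q := by
  have e : Y = Prod.snd ∘ (fun ω => (X ω, Y ω)) := rfl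
  rw [e, ← Measure.map_map measurable_snd (hX.prodMk hY), h, Measure.map_snd_prod]
  simp

/-- Map the third component of a right-nested triple law. -/
lemma map_triple_proj {A B C D : Type*} [MeasurableSpace A] [MeasurableSpace B]
    [MeasurableSpace C] [MeasurableSpace D]
    {X : Ω → A} {Y : Ω → B} {T : Ω → C} {g : C → D}
    (hX : Measurable X) (hY : Measurable Y) (hT : Measurable T) (hg : Measurable g)
    [SFinite (μ.map X)] [SFinite (μ.map Y)] [SFinite (μ.map T)]
    (h : μ.map (fun ω => (X ω, (Y ω, T ω))) = (μ.map X).prod ((μ.map Y).prod (μ.map T))) :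
    μ.map (fun ω => (X ω, (Y ω, g (T ω))))
      = (μ.map X).prod ((μ.map Y).prod (μ.map (fun ω => g (T ω)))) := by
  have e : (fun ω => (X ω, (Y ω, g (T ω))))
      = (Prod.map id (Prod.map id g)) ∘ (fun ω => (X ω, (Y ω, T ω))) := rfl
  rw [e, ← Measure.map_map (measurable_id.prodMap (measurable_id.prodMap hg))
      (hX.prodMk (hY.prodMk hT)), h,
    ← Measure.map_prod_map _ _ measurable_id (measurable_id.prodMap hg),
    ← Measure.map_prod_map _ _ measurable_id hg, Measure.map_id, Measure.map_id,
    Measure.map_map hg hT]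
  rfl

/-- From a right-nested product triple law, the pair of the first two components is
independent of the third. -/
lemma assoc_indep {A B C : Type*} [MeasurableSpace A] [MeasurableSpace B] [MeasurableSpace C]
    {X : Ω → A} {Y : Ω → B} {Z : Ω → C}
    (hX : Measurable X) (hY : Measurable Y) (hZ : Measurable Z)
    (h : μ.map (fun ω => (X ω, (Y ω, Z ω))) = (μ.map X).prod ((μ.map Y).prod (μ.map Z))) :
    IndepFun (fun ω => (X ω, Y ω)) Z μ := by
  haveI : IsProbabilityMeasure (μ.map X) := Measure.isProbabilityMeasure_map hX.aemeasurable
  haveI : IsProbabilityMeasure (μ.map Y) := Measure.isProbabilityMeasure_map hY.aemeasurable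
  haveI : IsProbabilityMeasure (μ.map Z) := Measure.isProbabilityMeasure_map hZ.aemeasurable
  refine pair_indep (hX.prodMk hY) hZ ?_
  have h2 : μ.map (fun ω => (X ω, Y ω)) = (μ.map X).prod (μ.map Y) := by
    have e2 : (fun ω => (X ω, Y ω))
        = (Prod.map id Prod.fst) ∘ (fun ω => (X ω, (Y ω, Z ω))) := rfl
    rw [e2, ← Measure.map_map (measurable_id.prodMap measurable_fst)
        (hX.prodMk (hY.prodMk hZ)), h,
      ← Measure.map_prod_map _ _ measurable_id measurable_fst, Measure.map_id,
      Measure.map_fst_prod]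
    simp
  have e : (fun ω => ((X ω, Y ω), Z ω))
      = MeasurableEquiv.prodAssoc.symm ∘ (fun ω => (X ω, (Y ω, Z ω))) := rfl
  rw [e, ← Measure.map_map MeasurableEquiv.prodAssoc.symm.measurable
      (hX.prodMk (hY.prodMk hZ)), h, h2, ← Measure.prodAssoc_prod,
    MeasurableEquiv.map_symm_map]

end RPSaux


/-- **Lemma 3, RPS case** (correlation of consecutive probings under random phase
shifts, direct path subtracted).  The samples are
`t p ω = (v ω)ᴴ ⬝ Φ p ω ⬝ u ω + (n p ω - n_d ω)` with `Φ p ω` the diagonal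
matrix with entries `exp (I * φ p i ω)`. -/
theorem correlation_consecutive_probings_RPS_direct_subtracted
    {Ω : Type*} [MeasurableSpace Ω] (μ : Measure Ω) [IsProbabilityMeasure μ]
    {N : ℕ} (hN : 1 ≤ N)
    (u v : Ω → Fin N → ℂ)
    (φ : Fin 2 → Fin N → Ω → ℝ)
    (n : Fin 2 → Ω → ℂ) (nd : Ω → ℂ)
    (t : Fin 2 → Ω → ℂ)
    (ht : ∀ p ω, t p ω =
        star (v ω) ⬝ᵥ
            ((Matrix.diagonal fun i => Complex.exp (Complex.I * (φ p i ω : ℂ))).mulVec (u ω))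
        + (n p ω - nd ω))
    -- measurability
    (hum : Measurable u) (hvm : Measurable v)
    (hφm : ∀ p i, Measurable (φ p i)) (hnm : ∀ p, Measurable (n p)) (hndm : Measurable nd)
    -- the 2N phases are mutually independent and uniform on (-π, π)
    (hφindep : iIndepFun
        (fun q : Fin 2 × Fin N => φ q.1 q.2) μ)
    (hφunif : ∀ p i, μ.map (φ p i)
        = (ENNReal.ofReal (2 * π))⁻¹ • (volume.restrict (Set.Ioo (-π) π)))
    -- the phase family is independent of (u, v, n₁, n₂, n_d)
    (hφrest : IndepFun (fun ω (q : Fin 2 × Fin N) => φ q.1 q.2 ω)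
        (fun ω => (u ω, v ω, n 0 ω, n 1 ω, nd ω)) μ)
    -- (u, v, n₁, n₂, n_d) mutually independent: joint law = product of laws
    (hindep : μ.map (fun ω => (u ω, v ω, n 0 ω, n 1 ω, nd ω)) =
        (μ.map u).prod ((μ.map v).prod
          ((μ.map (n 0)).prod ((μ.map (n 1)).prod (μ.map nd)))))
    -- square integrability
    (hnL2 : ∀ p, MemLp (n p) 2 μ) (hndL2 : MemLp nd 2 μ)
    (huL2 : ∀ i, MemLp (fun ω => u ω i) 2 μ)
    (hvL2 : ∀ i, MemLp (fun ω => v ω i) 2 μ)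
    -- zero means
    (hnmean : ∀ p, ∫ ω, n p ω ∂μ = 0)
    (hndmean : ∫ ω, nd ω ∂μ = 0)
    (humean : ∀ i, ∫ ω, u ω i ∂μ = 0)
    (hvmean : ∀ i, ∫ ω, v ω i ∂μ = 0)
    -- second moments
    (σ2 σd2 : ℝ)
    (hσ : ∀ p, ∫ ω, n p ω * star (n p ω) ∂μ = (σ2 : ℂ))
    (hnuncorr : ∫ ω, n 0 ω * star (n 1 ω) ∂μ = 0)
    (hσd : ∫ ω, nd ω * star (nd ω) ∂μ = (σd2 : ℂ))
    -- covariance matrices of the IRS channel vectors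
    (Ru Rv : Matrix (Fin N) (Fin N) ℂ)
    (hRu : ∀ i j, Ru i j = ∫ ω, u ω i * star (u ω j) ∂μ)
    (hRv : ∀ i j, Rv i j = ∫ ω, v ω i * star (v ω j) ∂μ) :
    -- correlation coefficient
    ∀ l : Fin 2,
      (∫ ω, t 0 ω * star (t 1 ω) ∂μ) / (∫ ω, t l ω * star (t l ω) ∂μ)
        = (σd2 : ℂ) / ((∑ i, Ru i i * Rv i i) + (σd2 : ℂ) + (σ2 : ℂ)) := by
  
  intro l
  classical
  have hui : ∀ i, Measurable fun ω => u ω i := fun i => (measurable_pi_apply i).comp hum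
  have hvi : ∀ i, Measurable fun ω => v ω i := fun i => (measurable_pi_apply i).comp hvm
  have hstarC : Measurable (star : ℂ → ℂ) := continuous_star.measurable
  have hm_vij : ∀ i j : Fin N, Measurable (fun w : Fin N → ℂ => star (w i) * w j) :=
    fun i j => (hstarC.comp (measurable_pi_apply i)).mul (measurable_pi_apply j)
  have hm_uij : ∀ i j : Fin N, Measurable (fun w : Fin N → ℂ => w i * star (w j)) :=
    fun i j => (measurable_pi_apply i).mul (hstarC.comp (measurable_pi_apply j))
  have hm_exppt : Measurable (fun x : ℝ => Complex.exp (Complex.I * (x : ℂ))) :=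
    (Complex.measurable_ofReal.const_mul Complex.I).cexp
  have hm_expptneg : Measurable (fun x : ℝ => Complex.exp (-(Complex.I * (x : ℂ)))) :=
    ((Complex.measurable_ofReal.const_mul Complex.I).neg).cexp
  have hm_phase : ∀ (p : Fin 2) (i : Fin N),
      Measurable (fun x : Fin 2 × Fin N → ℝ => Complex.exp (Complex.I * (x (p, i) : ℂ))) :=
    fun p i => ((Complex.measurable_ofReal.comp (measurable_pi_apply (p, i))).const_mul
      Complex.I).cexp
  have hm_phaseneg : ∀ (q : Fin 2) (j : Fin N),
      Measurable (fun x : Fin 2 × Fin N → ℝ => Complex.exp (-(Complex.I * (x (q, j) : ℂ)))) :=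
    fun q j => (((Complex.measurable_ofReal.comp (measurable_pi_apply (q, j))).const_mul
      Complex.I).neg).cexp
  have hm_phase2 : ∀ (p : Fin 2) (i : Fin N) (q : Fin 2) (j : Fin N),
      Measurable (fun x : Fin 2 × Fin N → ℝ =>
        Complex.exp (Complex.I * (x (p, i) : ℂ)) * Complex.exp (-(Complex.I * (x (q, j) : ℂ)))) :=
    fun p i q j => (hm_phase p i).mul (hm_phaseneg q j)
  have hm_G : ∀ i j : Fin N, Measurable (fun w : (Fin N → ℂ) × (Fin N → ℂ) =>
      (star (w.2 i) * w.2 j) * (w.1 i * star (w.1 j))) :=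
    fun i j => ((hstarC.comp ((measurable_pi_apply i).comp measurable_snd)).mul
        ((measurable_pi_apply j).comp measurable_snd)).mul
      (((measurable_pi_apply i).comp measurable_fst).mul
        (hstarC.comp ((measurable_pi_apply j).comp measurable_fst)))
  have hm_uv1 : ∀ i : Fin N, Measurable (fun w : (Fin N → ℂ) × (Fin N → ℂ) =>
      star (w.2 i) * w.1 i) :=
    fun i => (hstarC.comp ((measurable_pi_apply i).comp measurable_snd)).mul
      ((measurable_pi_apply i).comp measurable_fst)
  have hm_uv2 : ∀ j : Fin N, Measurable (fun w : (Fin N → ℂ) × (Fin N → ℂ) =>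
      w.2 j * star (w.1 j)) :=
    fun j => ((measurable_pi_apply j).comp measurable_snd).mul
      (hstarC.comp ((measurable_pi_apply j).comp measurable_fst))
  have hm_cross1 : ∀ i : Fin N, Measurable (fun w : ((Fin N → ℂ) × (Fin N → ℂ)) × ℂ =>
      (star (w.1.2 i) * w.1.1 i) * star w.2) :=
    fun i => ((hm_uv1 i).comp measurable_fst).mul (hstarC.comp measurable_snd)
  have hm_cross2 : ∀ j : Fin N, Measurable (fun w : ((Fin N → ℂ) × (Fin N → ℂ)) × ℂ =>
      (w.1.2 j * star (w.1.1 j)) * w.2) :=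
    fun j => ((hm_uv2 j).comp measurable_fst).mul measurable_snd
  have hm_projuv : Measurable (fun w : (Fin N → ℂ) × ((Fin N → ℂ) × (ℂ × (ℂ × ℂ))) =>
      (w.1, w.2.1)) := measurable_fst.prodMk (measurable_fst.comp measurable_snd)
  have hm_proj0 : Measurable (fun w : (Fin N → ℂ) × ((Fin N → ℂ) × (ℂ × (ℂ × ℂ))) =>
      ((w.1, w.2.1), w.2.2.1)) :=
    hm_projuv.prodMk (measurable_fst.comp (measurable_snd.comp measurable_snd))
  have hm_proj1 : Measurable (fun w : (Fin N → ℂ) × ((Fin N → ℂ) × (ℂ × (ℂ × ℂ))) =>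
      ((w.1, w.2.1), w.2.2.2.1)) :=
    hm_projuv.prodMk (measurable_fst.comp (measurable_snd.comp
      (measurable_snd.comp measurable_snd)))
  have hm_projd : Measurable (fun w : (Fin N → ℂ) × ((Fin N → ℂ) × (ℂ × (ℂ × ℂ))) =>
      ((w.1, w.2.1), w.2.2.2.2)) :=
    hm_projuv.prodMk (measurable_snd.comp (measurable_snd.comp
      (measurable_snd.comp measurable_snd)))
  have hg1 : Measurable (fun c : ℂ × (ℂ × ℂ) => c.2.1) :=
    measurable_fst.comp measurable_snd
  have hgd : Measurable (fun c : ℂ × (ℂ × ℂ) => c.2.2) :=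
    measurable_snd.comp measurable_snd
  haveI hPu : IsProbabilityMeasure (μ.map u) := Measure.isProbabilityMeasure_map hum.aemeasurable
  haveI hPv : IsProbabilityMeasure (μ.map v) := Measure.isProbabilityMeasure_map hvm.aemeasurable
  haveI hP0 : IsProbabilityMeasure (μ.map (n 0)) := Measure.isProbabilityMeasure_map (hnm 0).aemeasurable
  haveI hP1 : IsProbabilityMeasure (μ.map (n 1)) := Measure.isProbabilityMeasure_map (hnm 1).aemeasurable
  haveI hPd : IsProbabilityMeasure (μ.map nd) := Measure.isProbabilityMeasure_map hndm.aemeasurable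
  have hTm : Measurable (fun ω => (n 0 ω, (n 1 ω, nd ω))) :=
    (hnm 0).prodMk ((hnm 1).prodMk hndm)
  have hY0m : Measurable (fun ω => (v ω, (n 0 ω, (n 1 ω, nd ω)))) := hvm.prodMk hTm
  haveI hPT : IsProbabilityMeasure (μ.map (fun ω => (n 0 ω, (n 1 ω, nd ω)))) :=
    Measure.isProbabilityMeasure_map hTm.aemeasurable
  have hmapY0 : μ.map (fun ω => (v ω, (n 0 ω, (n 1 ω, nd ω))))
      = (μ.map v).prod ((μ.map (n 0)).prod ((μ.map (n 1)).prod (μ.map nd))) :=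
    map_snd_of_pair hum hY0m hindep
  have hmapT : μ.map (fun ω => (n 0 ω, (n 1 ω, nd ω)))
      = (μ.map (n 0)).prod ((μ.map (n 1)).prod (μ.map nd)) :=
    map_snd_of_pair hvm hTm hmapY0
  have hmapY2 : μ.map (fun ω => (n 1 ω, nd ω)) = (μ.map (n 1)).prod (μ.map nd) :=
    map_snd_of_pair (hnm 0) ((hnm 1).prodMk hndm) hmapT
  have hindep' : μ.map (fun ω => (u ω, (v ω, (n 0 ω, (n 1 ω, nd ω)))))
      = (μ.map u).prod ((μ.map v).prod (μ.map (fun ω => (n 0 ω, (n 1 ω, nd ω))))) := by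
    rw [hmapT]; exact hindep
  have Iuv : IndepFun u v μ :=
    (pair_indep hum hY0m (by rw [hmapY0]; exact hindep)).comp measurable_id measurable_fst
  have hmap3a : μ.map (fun ω => (u ω, (v ω, n 0 ω)))
      = (μ.map u).prod ((μ.map v).prod (μ.map (n 0))) := by
    exact map_triple_proj (g := Prod.fst) hum hvm hTm measurable_fst hindep'
  have hmap3b : μ.map (fun ω => (u ω, (v ω, n 1 ω)))
      = (μ.map u).prod ((μ.map v).prod (μ.map (n 1))) := by
    exact map_triple_proj (T := fun ω => (n 0 ω, (n 1 ω, nd ω))) hum hvm hTm hg1 hindep'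
  have hmap3d : μ.map (fun ω => (u ω, (v ω, nd ω)))
      = (μ.map u).prod ((μ.map v).prod (μ.map nd)) := by
    exact map_triple_proj (T := fun ω => (n 0 ω, (n 1 ω, nd ω))) hum hvm hTm hgd hindep'
  have Iuv_n : ∀ p : Fin 2, IndepFun (fun ω => (u ω, v ω)) (n p) μ := by
    intro p; fin_cases p
    · exact assoc_indep hum hvm (hnm 0) hmap3a
    · exact assoc_indep hum hvm (hnm 1) hmap3b
  have Iuv_nd : IndepFun (fun ω => (u ω, v ω)) nd μ :=
    assoc_indep hum hvm hndm hmap3d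
  have I_n_nd : ∀ p : Fin 2, IndepFun (n p) nd μ := by
    intro p; fin_cases p
    · exact (pair_indep (hnm 0) ((hnm 1).prodMk hndm) (by rw [hmapY2]; exact hmapT)).comp
        measurable_id measurable_snd
    · exact pair_indep (hnm 1) hndm hmapY2
  -- independence of the phase family and blocks of (u,v,n,nd)
  have hΦuvm : ∀ p : Fin 2, IndepFun (fun ω (q : Fin 2 × Fin N) => φ q.1 q.2 ω)
      (fun ω => ((u ω, v ω), n p ω)) μ := by
    intro p; fin_cases p
    · exact hφrest.comp measurable_id hm_proj0
    · exact hφrest.comp measurable_id hm_proj1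
  have hΦuvd : IndepFun (fun ω (q : Fin 2 × Fin N) => φ q.1 q.2 ω)
      (fun ω => ((u ω, v ω), nd ω)) μ :=
    hφrest.comp measurable_id hm_projd
  have hΦuv : IndepFun (fun ω (q : Fin 2 × Fin N) => φ q.1 q.2 ω)
      (fun ω => (u ω, v ω)) μ :=
    hφrest.comp measurable_id hm_projuv
  -- signal terms
  set A : Fin 2 → Fin N → Ω → ℂ :=
    fun p i ω => star (v ω i) * (Complex.exp (Complex.I * (φ p i ω : ℂ)) * u ω i) with hAdef
  have ht' : ∀ p ω, t p ω = (∑ i, A p i ω) + (n p ω - nd ω) := by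
    intro p ω
    rw [ht p ω]
    congr 1
    simp [hAdef, dotProduct, Matrix.mulVec_diagonal]
  -- phase factors
  have hexpm : ∀ (p : Fin 2) (i : Fin N),
      Measurable (fun ω => Complex.exp (Complex.I * (φ p i ω : ℂ))) :=
    fun p i => ((Complex.measurable_ofReal.comp (hφm p i)).const_mul Complex.I).cexp
  have hexpmneg : ∀ (p : Fin 2) (i : Fin N),
      Measurable (fun ω => Complex.exp (-(Complex.I * (φ p i ω : ℂ)))) :=
    fun p i => ((Complex.measurable_ofReal.comp (hφm p i)).const_mul Complex.I).neg.cexp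
  have hexpI : ∀ (p : Fin 2) (i : Fin N),
      Integrable (fun ω => Complex.exp (Complex.I * (φ p i ω : ℂ))) μ :=
    fun p i => integrable_unit (hexpm p i).aestronglyMeasurable
      (fun ω => le_of_eq (norm_exp_I_real _))
  have hexpIneg : ∀ (p : Fin 2) (i : Fin N),
      Integrable (fun ω => Complex.exp (-(Complex.I * (φ p i ω : ℂ)))) μ :=
    fun p i => integrable_unit (hexpmneg p i).aestronglyMeasurable
      (fun ω => le_of_eq (norm_exp_I_real_neg _))
  have hexp0 : ∀ (p : Fin 2) (i : Fin N),
      ∫ ω, Complex.exp (Complex.I * (φ p i ω : ℂ)) ∂μ = 0 :=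
    fun p i => integral_exp_I_unif (hφm p i) (hφunif p i)
  -- pointwise form of signal products
  have hpt : ∀ (p q : Fin 2) (i j : Fin N) ω, A p i ω * star (A q j ω) =
      (Complex.exp (Complex.I * (φ p i ω : ℂ)) * Complex.exp (-(Complex.I * (φ q j ω : ℂ)))) *
        ((star (v ω i) * v ω j) * (u ω i * star (u ω j))) := by
    intro p q i j ω
    simp only [hAdef]
    rw [star_mul', star_mul', star_star, star_exp_I_real]
    ring
  have hXv : ∀ i j : Fin N, Integrable (fun ω => star (v ω i) * v ω j) μ := fun i j =>
    integrable_mul_L2 (memL2_star (hvL2 i)) (hvL2 j)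
  have hYu : ∀ i j : Fin N, Integrable (fun ω => u ω i * star (u ω j)) μ := fun i j =>
    integrable_mul_L2 (huL2 i) (memL2_star (huL2 j))
  have hIndvu : ∀ i j : Fin N, IndepFun (fun ω => star (v ω i) * v ω j)
      (fun ω => u ω i * star (u ω j)) μ := fun i j =>
    Iuv.symm.comp (hm_vij i j) (hm_uij i j)
  have hGint : ∀ i j : Fin N,
      Integrable (fun ω => (star (v ω i) * v ω j) * (u ω i * star (u ω j))) μ :=
    fun i j => indep_integrable_mul (hIndvu i j) (hXv i j) (hYu i j)
  have hsig_int : ∀ (p q : Fin 2) (i j : Fin N),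
      Integrable (fun ω => A p i ω * star (A q j ω)) μ := by
    intro p q i j
    have hrw : (fun ω => A p i ω * star (A q j ω)) = fun ω =>
        (Complex.exp (Complex.I * (φ p i ω : ℂ)) * Complex.exp (-(Complex.I * (φ q j ω : ℂ)))) *
          ((star (v ω i) * v ω j) * (u ω i * star (u ω j))) := funext (hpt p q i j)
    rw [hrw]
    refine Integrable.bdd_mul (hGint i j)
      (((hexpm p i).mul (hexpmneg q j)).aestronglyMeasurable) (c := 1) (Filter.Eventually.of_forall fun ω => ?_)
    rw [norm_mul, norm_exp_I_real, norm_exp_I_real_neg, one_mul]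
  have hsig_off : ∀ (p q : Fin 2) (i j : Fin N), ((p, i) : Fin 2 × Fin N) ≠ (q, j) →
      ∫ ω, A p i ω * star (A q j ω) ∂μ = 0 := by
    intro p q i j hne
    have hrw : (fun ω => A p i ω * star (A q j ω)) = fun ω =>
        (Complex.exp (Complex.I * (φ p i ω : ℂ)) * Complex.exp (-(Complex.I * (φ q j ω : ℂ)))) *
          ((star (v ω i) * v ω j) * (u ω i * star (u ω j))) := funext (hpt p q i j)
    have hIndEG : IndepFun
        (fun ω => Complex.exp (Complex.I * (φ p i ω : ℂ)) *
          Complex.exp (-(Complex.I * (φ q j ω : ℂ))))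
        (fun ω => (star (v ω i) * v ω j) * (u ω i * star (u ω j))) μ :=
      hΦuv.comp (hm_phase2 p i q j) (hm_G i j)
    have hE2I : Integrable (fun ω => Complex.exp (Complex.I * (φ p i ω : ℂ)) *
        Complex.exp (-(Complex.I * (φ q j ω : ℂ)))) μ :=
      integrable_unit (((hexpm p i).mul (hexpmneg q j)).aestronglyMeasurable)
        (fun ω => by rw [norm_mul, norm_exp_I_real, norm_exp_I_real_neg, one_mul])
    have hE2val : ∫ ω, Complex.exp (Complex.I * (φ p i ω : ℂ)) *
        Complex.exp (-(Complex.I * (φ q j ω : ℂ))) ∂μ = 0 := by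
      have hIndee : IndepFun (fun ω => Complex.exp (Complex.I * (φ p i ω : ℂ)))
          (fun ω => Complex.exp (-(Complex.I * (φ q j ω : ℂ)))) μ :=
        (hφindep.indepFun hne).comp hm_exppt hm_expptneg
      have hIM2 : ∫ ω, Complex.exp (Complex.I * (φ p i ω : ℂ)) *
          Complex.exp (-(Complex.I * (φ q j ω : ℂ))) ∂μ
          = (∫ ω, Complex.exp (Complex.I * (φ p i ω : ℂ)) ∂μ) *
            ∫ ω, Complex.exp (-(Complex.I * (φ q j ω : ℂ))) ∂μ :=
        indep_integral_mul hIndee (hexpI p i) (hexpIneg q j)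
      rw [hIM2, hexp0 p i, zero_mul]
    have hIM : ∫ ω, (Complex.exp (Complex.I * (φ p i ω : ℂ)) *
        Complex.exp (-(Complex.I * (φ q j ω : ℂ)))) *
          ((star (v ω i) * v ω j) * (u ω i * star (u ω j))) ∂μ
        = (∫ ω, Complex.exp (Complex.I * (φ p i ω : ℂ)) *
            Complex.exp (-(Complex.I * (φ q j ω : ℂ))) ∂μ) *
          ∫ ω, (star (v ω i) * v ω j) * (u ω i * star (u ω j)) ∂μ :=
      indep_integral_mul hIndEG hE2I (hGint i j)
    rw [hrw, hIM, hE2val, zero_mul]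
  have hsig_diag : ∀ (p : Fin 2) (i : Fin N),
      ∫ ω, A p i ω * star (A p i ω) ∂μ = Rv i i * Ru i i := by
    intro p i
    have h1 : (fun ω => A p i ω * star (A p i ω)) = fun ω =>
        (star (v ω i) * v ω i) * (u ω i * star (u ω i)) := by
      funext ω
      rw [hpt p p i i, ← Complex.exp_add]
      simp
    have hIM : ∫ ω, (star (v ω i) * v ω i) * (u ω i * star (u ω i)) ∂μ
        = (∫ ω, star (v ω i) * v ω i ∂μ) * ∫ ω, u ω i * star (u ω i) ∂μ :=
      indep_integral_mul (hIndvu i i) (hXv i i) (hYu i i)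
    rw [h1, hIM]
    have e1 : ∫ ω, star (v ω i) * v ω i ∂μ = Rv i i := by
      rw [hRv i i]
      apply integral_congr_ae
      filter_upwards with ω
      ring
    have e2 : ∫ ω, u ω i * star (u ω i) ∂μ = Ru i i := (hRu i i).symm
    rw [e1, e2]
  -- cross terms with noise
  have hcrossA : ∀ (p : Fin 2) (i : Fin N) (m : Ω → ℂ), Measurable m → MemLp m 2 μ →
      IndepFun (fun ω => (u ω, v ω)) m μ →
      IndepFun (fun ω (q : Fin 2 × Fin N) => φ q.1 q.2 ω) (fun ω => ((u ω, v ω), m ω)) μ →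
      Integrable (fun ω => A p i ω * star (m ω)) μ ∧
        ∫ ω, A p i ω * star (m ω) ∂μ = 0 := by
    intro p i m hmm hm2 hindm hphim
    have hrw : (fun ω => A p i ω * star (m ω)) = fun ω =>
        Complex.exp (Complex.I * (φ p i ω : ℂ)) * ((star (v ω i) * u ω i) * star (m ω)) := by
      funext ω; simp only [hAdef]; ring
    have hX' : Integrable (fun ω => star (v ω i) * u ω i) μ :=
      integrable_mul_L2 (memL2_star (hvL2 i)) (huL2 i)
    have hY' : Integrable (fun ω => star (m ω)) μ := integrable_L2 (memL2_star hm2)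
    have hIndXY : IndepFun (fun ω => star (v ω i) * u ω i) (fun ω => star (m ω)) μ :=
      hindm.comp (hm_uv1 i) hstarC
    have hG' : Integrable (fun ω => (star (v ω i) * u ω i) * star (m ω)) μ :=
      indep_integrable_mul hIndXY hX' hY'
    have hIndEG : IndepFun (fun ω => Complex.exp (Complex.I * (φ p i ω : ℂ)))
        (fun ω => (star (v ω i) * u ω i) * star (m ω)) μ :=
      hphim.comp (hm_phase p i) (hm_cross1 i)
    constructor
    · rw [hrw]
      exact Integrable.bdd_mul hG' (hexpm p i).aestronglyMeasurable
        (Filter.Eventually.of_forall fun ω => le_of_eq (norm_exp_I_real _))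
    · have hIM : ∫ ω, Complex.exp (Complex.I * (φ p i ω : ℂ)) *
          ((star (v ω i) * u ω i) * star (m ω)) ∂μ
          = (∫ ω, Complex.exp (Complex.I * (φ p i ω : ℂ)) ∂μ) *
            ∫ ω, (star (v ω i) * u ω i) * star (m ω) ∂μ :=
        indep_integral_mul hIndEG (hexpI p i) hG'
      rw [hrw, hIM, hexp0 p i, zero_mul]
  have hcrossB : ∀ (q : Fin 2) (j : Fin N) (m : Ω → ℂ), Measurable m → MemLp m 2 μ →
      IndepFun (fun ω => (u ω, v ω)) m μ →
      IndepFun (fun ω (q' : Fin 2 × Fin N) => φ q'.1 q'.2 ω) (fun ω => ((u ω, v ω), m ω)) μ →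
      Integrable (fun ω => m ω * star (A q j ω)) μ ∧
        ∫ ω, m ω * star (A q j ω) ∂μ = 0 := by
    intro q j m hmm hm2 hindm hphim
    have hrw : (fun ω => m ω * star (A q j ω)) = fun ω =>
        Complex.exp (-(Complex.I * (φ q j ω : ℂ))) * ((v ω j * star (u ω j)) * m ω) := by
      funext ω
      simp only [hAdef]
      rw [star_mul', star_mul', star_star, star_exp_I_real]
      ring
    have hX' : Integrable (fun ω => v ω j * star (u ω j)) μ :=
      integrable_mul_L2 (hvL2 j) (memL2_star (huL2 j))
    have hY' : Integrable m μ := integrable_L2 hm2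
    have hIndXY : IndepFun (fun ω => v ω j * star (u ω j)) m μ :=
      hindm.comp (hm_uv2 j) measurable_id
    have hG' : Integrable (fun ω => (v ω j * star (u ω j)) * m ω) μ :=
      indep_integrable_mul hIndXY hX' hY'
    have hIndEG : IndepFun (fun ω => Complex.exp (-(Complex.I * (φ q j ω : ℂ))))
        (fun ω => (v ω j * star (u ω j)) * m ω) μ :=
      hphim.comp (hm_phaseneg q j) (hm_cross2 j)
    have hexpneg0 : ∫ ω, Complex.exp (-(Complex.I * (φ q j ω : ℂ))) ∂μ = 0 := by
      have hsw : (fun ω => Complex.exp (-(Complex.I * (φ q j ω : ℂ))))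
          = fun ω => star (Complex.exp (Complex.I * (φ q j ω : ℂ))) := by
        funext ω; rw [star_exp_I_real]
      rw [hsw, integral_star', hexp0 q j, star_zero]
    constructor
    · rw [hrw]
      exact Integrable.bdd_mul hG' (hexpmneg q j).aestronglyMeasurable
        (Filter.Eventually.of_forall fun ω => le_of_eq (norm_exp_I_real_neg _))
    · have hIM : ∫ ω, Complex.exp (-(Complex.I * (φ q j ω : ℂ))) *
          ((v ω j * star (u ω j)) * m ω) ∂μ
          = (∫ ω, Complex.exp (-(Complex.I * (φ q j ω : ℂ))) ∂μ) *
            ∫ ω, (v ω j * star (u ω j)) * m ω ∂μ :=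
        indep_integral_mul hIndEG (hexpIneg q j) hG'
      rw [hrw, hIM, hexpneg0, zero_mul]
  -- noise moments
  have hInI : ∀ p : Fin 2, Integrable (n p) μ := fun p => integrable_L2 (hnL2 p)
  have hndI : Integrable nd μ := integrable_L2 hndL2
  have hprod_nnd : ∀ p : Fin 2, ∫ ω, n p ω * star (nd ω) ∂μ = 0 := by
    intro p
    have hIM : ∫ ω, n p ω * star (nd ω) ∂μ
        = (∫ ω, n p ω ∂μ) * ∫ ω, star (nd ω) ∂μ :=
      indep_integral_mul ((I_n_nd p).comp measurable_id hstarC) (hInI p)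
        (integrable_L2 (memL2_star hndL2))
    rw [hIM, hnmean p, zero_mul]
  have hprod_ndn : ∀ p : Fin 2, ∫ ω, nd ω * star (n p ω) ∂μ = 0 := by
    intro p
    have hIM : ∫ ω, nd ω * star (n p ω) ∂μ
        = (∫ ω, nd ω ∂μ) * ∫ ω, star (n p ω) ∂μ :=
      indep_integral_mul ((I_n_nd p).symm.comp measurable_id hstarC) hndI
        (integrable_L2 (memL2_star (hnL2 p)))
    rw [hIM, hndmean, zero_mul]
  have hnoise_int : ∀ p q : Fin 2,
      Integrable (fun ω => (n p ω - nd ω) * star (n q ω - nd ω)) μ := fun p q =>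
    integrable_mul_L2 ((hnL2 p).sub hndL2) (memL2_star ((hnL2 q).sub hndL2))
  have hnoise_val : ∀ p q : Fin 2, ∫ ω, (n p ω - nd ω) * star (n q ω - nd ω) ∂μ
      = (∫ ω, n p ω * star (n q ω) ∂μ) + (σd2 : ℂ) := by
    intro p q
    have i1 : Integrable (fun ω => n p ω * star (n q ω)) μ :=
      integrable_mul_L2 (hnL2 p) (memL2_star (hnL2 q))
    have i2 : Integrable (fun ω => n p ω * star (nd ω)) μ :=
      integrable_mul_L2 (hnL2 p) (memL2_star hndL2)
    have i3 : Integrable (fun ω => nd ω * star (n q ω)) μ :=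
      integrable_mul_L2 hndL2 (memL2_star (hnL2 q))
    have i4 : Integrable (fun ω => nd ω * star (nd ω)) μ :=
      integrable_mul_L2 hndL2 (memL2_star hndL2)
    have hrw : (fun ω => (n p ω - nd ω) * star (n q ω - nd ω)) = fun ω =>
        (n p ω * star (n q ω) - n p ω * star (nd ω))
          - (nd ω * star (n q ω) - nd ω * star (nd ω)) := by
      funext ω; rw [star_sub]; ring
    have i12 : Integrable (fun ω => n p ω * star (n q ω) - n p ω * star (nd ω)) μ := i1.sub i2
    have i34 : Integrable (fun ω => nd ω * star (n q ω) - nd ω * star (nd ω)) μ := i3.sub i4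
    rw [hrw, integral_sub i12 i34, integral_sub i1 i2, integral_sub i3 i4,
      hprod_nnd p, hprod_ndn q, hσd]
    ring
  -- the master formula
  have key : ∀ p q : Fin 2,
      ∫ ω, t p ω * star (t q ω) ∂μ
        = (∑ i, ∑ j, ∫ ω, A p i ω * star (A q j ω) ∂μ)
          + ((∫ ω, n p ω * star (n q ω) ∂μ) + (σd2 : ℂ)) := by
    intro p q
    have hpt2 : (fun ω => t p ω * star (t q ω)) = fun ω =>
        (∑ i, ∑ j, A p i ω * star (A q j ω))
        + (∑ i, A p i ω * star (n q ω - nd ω))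
        + ((∑ j, (n p ω - nd ω) * star (A q j ω))
        + (n p ω - nd ω) * star (n q ω - nd ω)) := by
      funext ω
      rw [ht' p ω, ht' q ω, star_add, star_sum, add_mul, mul_add, mul_add,
        Finset.sum_mul_sum, Finset.sum_mul, Finset.mul_sum]
    have hc1 : ∀ i : Fin N, Integrable (fun ω => A p i ω * star (n q ω - nd ω)) μ ∧
        ∫ ω, A p i ω * star (n q ω - nd ω) ∂μ = 0 := by
      intro i
      obtain ⟨ia, va⟩ := hcrossA p i (n q) (hnm q) (hnL2 q) (Iuv_n q) (hΦuvm q)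
      obtain ⟨ib, vb⟩ := hcrossA p i nd hndm hndL2 Iuv_nd hΦuvd
      have hr : (fun ω => A p i ω * star (n q ω - nd ω)) = fun ω =>
          A p i ω * star (n q ω) - A p i ω * star (nd ω) := by
        funext ω; rw [star_sub]; ring
      refine ⟨by rw [hr]; exact ia.sub ib, ?_⟩
      rw [hr, integral_sub ia ib, va, vb, sub_zero]
    have hc2 : ∀ j : Fin N, Integrable (fun ω => (n p ω - nd ω) * star (A q j ω)) μ ∧
        ∫ ω, (n p ω - nd ω) * star (A q j ω) ∂μ = 0 := by
      intro j
      obtain ⟨ia, va⟩ := hcrossB q j (n p) (hnm p) (hnL2 p) (Iuv_n p) (hΦuvm p)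
      obtain ⟨ib, vb⟩ := hcrossB q j nd hndm hndL2 Iuv_nd hΦuvd
      have hr : (fun ω => (n p ω - nd ω) * star (A q j ω)) = fun ω =>
          n p ω * star (A q j ω) - nd ω * star (A q j ω) := by
        funext ω; ring
      refine ⟨by rw [hr]; exact ia.sub ib, ?_⟩
      rw [hr, integral_sub ia ib, va, vb, sub_zero]
    have Isig : Integrable (fun ω => ∑ i, ∑ j, A p i ω * star (A q j ω)) μ :=
      integrable_finset_sum _ (fun i _ => integrable_finset_sum _ (fun j _ => hsig_int p q i j))
    have Icr1 : Integrable (fun ω => ∑ i, A p i ω * star (n q ω - nd ω)) μ :=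
      integrable_finset_sum _ (fun i _ => (hc1 i).1)
    have Icr2 : Integrable (fun ω => ∑ j, (n p ω - nd ω) * star (A q j ω)) μ :=
      integrable_finset_sum _ (fun j _ => (hc2 j).1)
    have hdd : ∫ ω, (∑ i, ∑ j, A p i ω * star (A q j ω)) ∂μ
        = ∑ i, ∑ j, ∫ ω, A p i ω * star (A q j ω) ∂μ := by
      rw [integral_finset_sum _
        (fun i _ => integrable_finset_sum _ (fun j _ => hsig_int p q i j))]
      exact Finset.sum_congr rfl (fun i _ =>
        integral_finset_sum _ (fun j _ => hsig_int p q i j))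
    have hcc1 : ∫ ω, (∑ i, A p i ω * star (n q ω - nd ω)) ∂μ = 0 := by
      rw [integral_finset_sum _ (fun i _ => (hc1 i).1)]
      exact Finset.sum_eq_zero (fun i _ => (hc1 i).2)
    have hcc2 : ∫ ω, (∑ j, (n p ω - nd ω) * star (A q j ω)) ∂μ = 0 := by
      rw [integral_finset_sum _ (fun j _ => (hc2 j).1)]
      exact Finset.sum_eq_zero (fun j _ => (hc2 j).2)
    have I12 : Integrable (fun ω => (∑ i, ∑ j, A p i ω * star (A q j ω))
        + (∑ i, A p i ω * star (n q ω - nd ω))) μ := Isig.add Icr1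
    have I34 : Integrable (fun ω => (∑ j, (n p ω - nd ω) * star (A q j ω))
        + (n p ω - nd ω) * star (n q ω - nd ω)) μ := Icr2.add (hnoise_int p q)
    rw [hpt2, integral_add I12 I34, integral_add Isig Icr1,
      integral_add Icr2 (hnoise_int p q), hdd, hcc1, hcc2,
      hnoise_val p q, add_zero, zero_add]
  have hnum : ∫ ω, t 0 ω * star (t 1 ω) ∂μ = (σd2 : ℂ) := by
    rw [key 0 1, hnuncorr]
    have hz : (∑ i, ∑ j, ∫ ω, A 0 i ω * star (A 1 j ω) ∂μ) = 0 :=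
      Finset.sum_eq_zero fun i _ => Finset.sum_eq_zero fun j _ =>
        hsig_off 0 1 i j (fun h => absurd (congrArg Prod.fst h) (by decide : ¬ ((0 : Fin 2) = 1)))
    rw [hz]
    ring
  have hden : ∫ ω, t l ω * star (t l ω) ∂μ
      = (∑ i, Ru i i * Rv i i) + (σd2 : ℂ) + (σ2 : ℂ) := by
    rw [key l l, hσ l]
    have hd : (∑ i, ∑ j, ∫ ω, A l i ω * star (A l j ω) ∂μ) = ∑ i, Ru i i * Rv i i := by
      refine Finset.sum_congr rfl fun i _ => ?_
      rw [Finset.sum_eq_single_of_mem i (Finset.mem_univ i)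
        (fun j _ hji => hsig_off l l i j (fun h => hji (congrArg Prod.snd h).symm)),
        hsig_diag l i]
      ring
    rw [hd]
    ring
  rw [hnum, hden]
end

section
/- A uniform random phase times a complex Gaussian is complex Gaussian (Theorem 3). Let σ² ≥ 0. Let (Ω, μ) be a probability space and let Θ : Ω → ℝ and X : Ω → ℂ be independent random variables such that Θ is uniform on (−π, π) and the law of X is CN(0, σ²). Then the law of the random variable ω ↦ Complex.exp(I · Θ(ω)) · X(ω) is again CN(0, σ²). -/
open MeasureTheory ProbabilityTheory Complex Real

open scoped ENNReal NNReal

/-- The circularly symmetric complex Gaussian measure `CN(0, v)` on `ℂ`: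
the pushforward of `gaussianReal 0 (v/2) ×ₘ gaussianReal 0 (v/2)` under
`(x, y) ↦ x + y * I`. -/
noncomputable def complexGaussian (v : ℝ) : Measure ℂ :=
  ((gaussianReal 0 (v / 2).toNNReal).prod (gaussianReal 0 (v / 2).toNNReal)).map
    (fun p => (p.1 : ℂ) + (p.2 : ℂ) * Complex.I)

instance complexGaussian_isProbabilityMeasure (v : ℝ) :
    IsProbabilityMeasure (complexGaussian v) := by
  rw [complexGaussian]
  exact Measure.isProbabilityMeasure_map (by fun_prop)

/-- Pushforward of a `withDensity` measure under a measure preserving map. -/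
lemma aux_map_withDensity {α β : Type*} [MeasurableSpace α] [MeasurableSpace β]
    {μ : Measure α} {ν : Measure β} {T : α → β} (hT : MeasurePreserving T μ ν)
    {f : β → ℝ≥0∞} (hf : Measurable f) :
    (μ.withDensity (fun a => f (T a))).map T = ν.withDensity f := by
  ext s hs
  rw [Measure.map_apply hT.measurable hs, withDensity_apply _ (hT.measurable hs),
    withDensity_apply _ hs, ← lintegral_indicator (hT.measurable hs),
    ← lintegral_indicator hs, ← hT.lintegral_comp (hf.indicator hs)]
  congr 1

/-- Product of two `withDensity` measures. -/
lemma aux_withDensity_prod {α β : Type*} [MeasurableSpace α] [MeasurableSpace β]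
    (μ : Measure α) (ν : Measure β) [SigmaFinite μ] [SigmaFinite ν]
    {f : α → ℝ≥0∞} {g : β → ℝ≥0∞} (hf : Measurable f) (hg : Measurable g)
    [SigmaFinite (ν.withDensity g)] :
    (μ.withDensity f).prod (ν.withDensity g)
      = (μ.prod ν).withDensity (fun p => f p.1 * g p.2) := by
  have hm : Measurable fun p : α × β => f p.1 * g p.2 :=
    (hf.comp measurable_fst).mul (hg.comp measurable_snd)
  ext s hs
  rw [Measure.prod_apply hs, withDensity_apply _ hs, ← lintegral_indicator hs,
    lintegral_prod _ (hm.indicator hs).aemeasurable,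
    lintegral_withDensity_eq_lintegral_mul _ hf
      (measurable_measure_prodMk_left hs)]
  congr 1
  ext x
  rw [Pi.mul_apply, withDensity_apply _ (measurable_prodMk_left hs),
    ← lintegral_indicator (measurable_prodMk_left hs),
    ← lintegral_const_mul _ (hg.indicator (measurable_prodMk_left hs))]
  congr 1
  ext y
  by_cases hy : (x, y) ∈ s <;> simp [Set.indicator, Set.mem_preimage, hy]

/-- For nonzero variance, the complex Gaussian is a density against Lebesgue on `ℂ`. -/
lemma complexGaussian_eq_withDensity (v : ℝ) (hw : (v / 2).toNNReal ≠ 0) :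
    complexGaussian v = (volume : Measure ℂ).withDensity
      (fun z => gaussianPDF 0 (v / 2).toNNReal z.re * gaussianPDF 0 (v / 2).toNNReal z.im) := by
  set w := (v / 2).toNNReal with hwdef
  haveI : SigmaFinite ((volume : Measure ℝ).withDensity (gaussianPDF 0 w)) := by
    rw [← gaussianReal_of_var_ne_zero 0 hw]; infer_instance
  rw [complexGaussian, gaussianReal_of_var_ne_zero _ hw,
    aux_withDensity_prod volume volume (measurable_gaussianPDF 0 w) (measurable_gaussianPDF 0 w)]
  have hfun : (fun p : ℝ × ℝ => (p.1 : ℂ) + (p.2 : ℂ) * Complex.I)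
      = (Complex.measurableEquivRealProd.symm : ℝ × ℝ → ℂ) := by
    funext p
    rw [Complex.measurableEquivRealProd_symm_apply]
    exact (Complex.mk_eq_add_mul_I p.1 p.2).symm
  have hdens : (fun p : ℝ × ℝ => gaussianPDF 0 w p.1 * gaussianPDF 0 w p.2)
      = fun p : ℝ × ℝ => (fun z : ℂ => gaussianPDF 0 w z.re * gaussianPDF 0 w z.im)
          (Complex.measurableEquivRealProd.symm p) := by
    funext p
    rw [Complex.measurableEquivRealProd_symm_apply]
  rw [hfun, hdens]
  have key := aux_map_withDensity (μ := (volume : Measure ℝ).prod volume)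
    (ν := (volume : Measure ℂ))
    (Complex.volume_preserving_equiv_real_prod.symm Complex.measurableEquivRealProd)
    ((measurable_gaussianPDF 0 w |>.comp Complex.measurable_re).mul
      (measurable_gaussianPDF 0 w |>.comp Complex.measurable_im))
  exact key

/-- The product density depends only on `normSq z`. -/
lemma gaussianPDF_prod_eq (w : ℝ≥0) (z : ℂ) :
    gaussianPDF 0 w z.re * gaussianPDF 0 w z.im
      = ENNReal.ofReal (((Real.sqrt (2 * π * w))⁻¹) ^ 2
          * Real.exp (-Complex.normSq z / (2 * w))) := by
  simp only [gaussianPDF]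
  rw [← ENNReal.ofReal_mul (gaussianPDFReal_nonneg 0 w z.re)]
  congr 1
  simp only [gaussianPDFReal, sub_zero]
  rw [show ((Real.sqrt (2 * π * w))⁻¹ * Real.exp (-z.re ^ 2 / (2 * w)))
        * ((Real.sqrt (2 * π * w))⁻¹ * Real.exp (-z.im ^ 2 / (2 * w)))
      = ((Real.sqrt (2 * π * w))⁻¹) ^ 2
        * (Real.exp (-z.re ^ 2 / (2 * w)) * Real.exp (-z.im ^ 2 / (2 * w))) by ring,
    ← Real.exp_add]
  congr 2
  rw [Complex.normSq_apply]
  ring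

/-- Rotation invariance of the complex Gaussian. -/
lemma complexGaussian_map_rotation (v : ℝ) (c : Circle) :
    (complexGaussian v).map (fun z => (c : ℂ) * z) = complexGaussian v := by
  by_cases hw : (v / 2).toNNReal = 0
  · have hd : complexGaussian v = Measure.dirac 0 := by
      rw [complexGaussian, hw, gaussianReal_zero_var, Measure.dirac_prod_dirac,
        Measure.map_dirac' (by fun_prop)]
      norm_num
    rw [hd, Measure.map_dirac' (by fun_prop)]
    simp
  · set w := (v / 2).toNNReal
    have hFm : Measurable (fun z : ℂ => gaussianPDF 0 w z.re * gaussianPDF 0 w z.im) :=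
      (measurable_gaussianPDF 0 w |>.comp Complex.measurable_re).mul
        (measurable_gaussianPDF 0 w |>.comp Complex.measurable_im)
    rw [complexGaussian_eq_withDensity v hw]
    have hinv : (fun z : ℂ => (fun z : ℂ => gaussianPDF 0 w z.re * gaussianPDF 0 w z.im)
        ((rotation c) z)) = fun z : ℂ => gaussianPDF 0 w z.re * gaussianPDF 0 w z.im := by
      funext z
      simp only [rotation_apply, gaussianPDF_prod_eq, Complex.normSq_mul,
        Circle.normSq_coe, one_mul]
    have h := aux_map_withDensity (μ := (volume : Measure ℂ)) (ν := (volume : Measure ℂ))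
      (f := fun z : ℂ => gaussianPDF 0 w z.re * gaussianPDF 0 w z.im)
      ((rotation c).measurePreserving) hFm
    rw [hinv] at h
    have hcoe : ⇑(rotation c) = fun z : ℂ => (c : ℂ) * z := by
      funext z; exact rotation_apply c z
    rwa [hcoe] at h

/-- **Theorem 3**: a uniform random phase times an independent circularly
symmetric complex Gaussian is again complex Gaussian with the same variance. -/
theorem uniform_phase_mul_complexGaussian
    (v : ℝ) (hv : 0 ≤ v)
    {Ω : Type*} [MeasurableSpace Ω] (μ : Measure Ω) [IsProbabilityMeasure μ]
    (Θ : Ω → ℝ) (X : Ω → ℂ)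
    (hΘm : Measurable Θ) (hXm : Measurable X)
    (hind : IndepFun Θ X μ)
    (hΘlaw : μ.map Θ = (ENNReal.ofReal (2 * π))⁻¹ • (volume.restrict (Set.Ioo (-π) π)))
    (hXlaw : μ.map X = complexGaussian v) :
    μ.map (fun ω => Complex.exp (Complex.I * (Θ ω : ℂ)) * X ω) = complexGaussian v := by
  have hprod : μ.map (fun ω => (Θ ω, X ω)) = (μ.map Θ).prod (μ.map X) :=
    (indepFun_iff_map_prod_eq_prod_map_map hΘm.aemeasurable hXm.aemeasurable).mp hind
  have hf : Measurable (fun p : ℝ × ℂ => Complex.exp (Complex.I * (p.1 : ℂ)) * p.2) := by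
    fun_prop
  have hcomp : μ.map (fun ω => Complex.exp (Complex.I * (Θ ω : ℂ)) * X ω)
      = (μ.map (fun ω => (Θ ω, X ω))).map
          (fun p : ℝ × ℂ => Complex.exp (Complex.I * (p.1 : ℂ)) * p.2) := by
    rw [Measure.map_map hf (hΘm.prodMk hXm)]
    rfl
  haveI hprob : IsProbabilityMeasure (μ.map Θ) := Measure.isProbabilityMeasure_map hΘm.aemeasurable
  rw [hcomp, hprod, hXlaw]
  ext s hs
  rw [Measure.map_apply hf hs, Measure.prod_apply (hf hs)]
  have hsec : ∀ θ : ℝ, complexGaussian v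
      (Prod.mk θ ⁻¹' ((fun p : ℝ × ℂ => Complex.exp (Complex.I * (p.1 : ℂ)) * p.2) ⁻¹' s))
      = complexGaussian v s := by
    intro θ
    have hc : Complex.exp (Complex.I * (θ : ℂ)) = ((Circle.exp θ : Circle) : ℂ) := by
      rw [Circle.coe_exp, mul_comm]
    have hpre : (Prod.mk θ ⁻¹'
        ((fun p : ℝ × ℂ => Complex.exp (Complex.I * (p.1 : ℂ)) * p.2) ⁻¹' s))
        = (fun z : ℂ => ((Circle.exp θ : Circle) : ℂ) * z) ⁻¹' s := by
      ext z
      simp [Set.mem_preimage, hc]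
    rw [hpre, ← Measure.map_apply (by fun_prop) hs, complexGaussian_map_rotation]
  simp_rw [hsec]
  simp
end
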